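/- Let S be a finite set, let A, B, C, D be pairwise disjoint nonempty subsets of S, and let π₀ be a partition of S ∖ (A∪B∪C∪D). Then for every partition ρ of S: ⟨π₀∪{A∪C, B∪D}, ρ⟩ + ⟨π₀∪{A∪B, C∪D}, ρ⟩ + ⟨π₀∪{A∪D, B∪C}, ρ⟩ = ⟨π₀∪{A, B∪C∪D}, ρ⟩ + ⟨π₀∪{B, A∪C∪D}, ρ⟩ + ⟨π₀∪{C, A∪B∪D}, ρ⟩ + ⟨π₀∪{D, A∪B∪C}, ρ⟩. (Here π₀∪{X,Y} denotes the partition of S whose parts are the parts of π₀ together with X and Y.) -/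

import Mathlib

open BigOperators
open scoped Classical

/-- `P` is a partition of the finset `T`: its parts are nonempty, pairwise disjoint,
and their union is `T`. -/
def IsPartitionOn {S : Type*} [DecidableEq S] (P : Finset (Finset S)) (T : Finset S) : Prop :=
  (∀ p ∈ P, p.Nonempty) ∧
  (∀ p ∈ P, ∀ q ∈ P, p ≠ q → Disjoint p q) ∧
  P.biUnion id = T

/-- The grove bilinear form `⟨τ,σ⟩` on partitions of a finite set `S` (represented as
finsets of parts): it is `1` if the numbers of parts of `τ` and `σ` add up to `|S| + 1`
and the transitive closure of the union of the two relations has a single equivalence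
class, and `0` otherwise. -/
noncomputable def pform {S : Type*} [Fintype S] [DecidableEq S]
    (τ σ : Finset (Finset S)) : ℝ :=
  if τ.card + σ.card = Fintype.card S + 1 ∧
      (∀ x y : S, Relation.EqvGen (fun u v =>
        (∃ p ∈ τ, u ∈ p ∧ v ∈ p) ∨ (∃ q ∈ σ, u ∈ q ∧ v ∈ q)) x y)
  then 1 else 0


section Aux
variable {S : Type*}

lemma eqvGen_of_imp {r r' : S → S → Prop} (h : ∀ u v, r u v → Relation.EqvGen r' u v) :
    ∀ {x y}, Relation.EqvGen r x y → Relation.EqvGen r' x y := by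
  intro x y hxy
  induction hxy with
  | rel u v huv => exact h u v huv
  | refl u => exact Relation.EqvGen.refl u
  | symm u v _ ih => exact Relation.EqvGen.symm _ _ ih
  | trans u v w _ _ ih1 ih2 => exact Relation.EqvGen.trans _ _ _ ih1 ih2

lemma eqvGen_iff_of_iff {r r' : S → S → Prop} (h : ∀ u v, r u v ↔ r' u v) {x y} :
    Relation.EqvGen r x y ↔ Relation.EqvGen r' x y :=
  ⟨eqvGen_of_imp (fun u v huv => Relation.EqvGen.rel u v ((h u v).1 huv)),
   eqvGen_of_imp (fun u v huv => Relation.EqvGen.rel u v ((h u v).2 huv))⟩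

lemma eqvGen_or_left {r b : S → S → Prop} {x y} :
    Relation.EqvGen (fun u v => Relation.EqvGen r u v ∨ b u v) x y ↔
      Relation.EqvGen (fun u v => r u v ∨ b u v) x y := by
  constructor
  · apply eqvGen_of_imp; intro u v huv
    rcases huv with h | h
    · exact eqvGen_of_imp (fun a b' hab => Relation.EqvGen.rel a b' (Or.inl hab)) h
    · exact Relation.EqvGen.rel u v (Or.inr h)
  · apply eqvGen_of_imp; intro u v huv
    rcases huv with h | h
    · exact Relation.EqvGen.rel u v (Or.inl (Relation.EqvGen.rel u v h))
    · exact Relation.EqvGen.rel u v (Or.inr h)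

variable [DecidableEq S]
set_option linter.unusedSectionVars false

/-- Merge a setoid with the full relation on a finset `B`. -/
def sAdd (s : Setoid S) (B : Finset S) : Setoid S :=
  Relation.EqvGen.setoid (fun u v => s.r u v ∨ (u ∈ B ∧ v ∈ B))

/-- Merge a setoid with a list of blocks. -/
def sAddL (s : Setoid S) (L : List (Finset S)) : Setoid S :=
  Relation.EqvGen.setoid (fun u v => s.r u v ∨ ∃ B ∈ L, u ∈ B ∧ v ∈ B)

lemma sAdd_r (s : Setoid S) (B : Finset S) (x y : S) :
    (sAdd s B).r x y ↔ s.r x y ∨ ((∃ b ∈ B, s.r x b) ∧ (∃ b ∈ B, s.r y b)) := by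
  constructor
  · intro h
    induction h with
    | rel u v huv =>
      rcases huv with h | ⟨hu, hv⟩
      · exact Or.inl h
      · exact Or.inr ⟨⟨u, hu, s.iseqv.refl u⟩, ⟨v, hv, s.iseqv.refl v⟩⟩
    | refl u => exact Or.inl (s.iseqv.refl u)
    | symm u v _ ih =>
      rcases ih with h | ⟨h1, h2⟩
      · exact Or.inl (s.iseqv.symm h)
      · exact Or.inr ⟨h2, h1⟩
    | trans u v w _ _ ih1 ih2 =>
      rcases ih1 with h1 | ⟨h1a, h1b⟩
      · rcases ih2 with h2 | ⟨h2a, h2b⟩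
        · exact Or.inl (s.iseqv.trans h1 h2)
        · refine Or.inr ⟨?_, h2b⟩
          obtain ⟨b, hb, hvb⟩ := h2a
          exact ⟨b, hb, s.iseqv.trans h1 hvb⟩
      · rcases ih2 with h2 | ⟨h2a, h2b⟩
        · refine Or.inr ⟨h1a, ?_⟩
          obtain ⟨b, hb, hvb⟩ := h1b
          exact ⟨b, hb, s.iseqv.trans (s.iseqv.symm h2) hvb⟩
        · exact Or.inr ⟨h1a, h2b⟩
  · rintro (h | ⟨⟨b, hb, hxb⟩, ⟨b', hb', hyb⟩⟩)
    · exact Relation.EqvGen.rel _ _ (Or.inl h)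
    · refine Relation.EqvGen.trans _ _ _ (Relation.EqvGen.rel _ _ (Or.inl hxb)) ?_
      refine Relation.EqvGen.trans _ _ _ (Relation.EqvGen.rel _ _ (Or.inr ⟨hb, hb'⟩)) ?_
      exact Relation.EqvGen.symm _ _ (Relation.EqvGen.rel _ _ (Or.inl hyb))

lemma sAdd_sAdd_rel (s : Setoid S) (X Y : Finset S) (x y : S) :
    (sAdd (sAdd s X) Y).r x y ↔ (sAddL s [X, Y]).r x y := by
  show Relation.EqvGen _ x y ↔ Relation.EqvGen _ x y
  rw [show (fun u v => (sAdd s X).r u v ∨ (u ∈ Y ∧ v ∈ Y)) =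
      (fun u v => Relation.EqvGen (fun a b => s.r a b ∨ (a ∈ X ∧ b ∈ X)) u v ∨ (u ∈ Y ∧ v ∈ Y))
      from rfl]
  rw [eqvGen_or_left]
  apply eqvGen_iff_of_iff
  intro u v
  simp only [List.mem_cons, List.not_mem_nil, or_false, List.mem_singleton]
  constructor
  · rintro ((h | h) | h)
    · exact Or.inl h
    · exact Or.inr ⟨X, Or.inl rfl, h⟩
    · exact Or.inr ⟨Y, Or.inr rfl, h⟩
  · rintro (h | ⟨B, (rfl | rfl), h⟩)
    · exact Or.inl (Or.inl h)
    · exact Or.inl (Or.inr h)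
    · exact Or.inr h

end Aux

section Card
variable {S : Type*} [DecidableEq S] [Fintype S]
set_option linter.unusedSectionVars false

lemma listsum_eq {α : Type*} (t : Finset α) (f : α → ℕ) : (t.toList.map f).sum = t.sum f := by
  calc (t.toList.map f).sum = ((↑(t.toList.map f) : Multiset ℕ)).sum := (Multiset.sum_coe _).symm
    _ = (Multiset.map f ↑t.toList).sum := by rw [Multiset.map_coe]
    _ = (Multiset.map f t.val).sum := by rw [Finset.coe_toList]
    _ = t.sum f := rfl

lemma sAdd_card (s : Setoid S) (B : Finset S) (hB : B.Nonempty) :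
    Fintype.card (Quotient s) + 1 ≤ Fintype.card (Quotient (sAdd s B)) + B.card := by
  classical
  obtain ⟨b₀, hb₀⟩ := hB
  have hmap : ∀ a b : S, s.r a b → (sAdd s B).r a b :=
    fun a b h => Relation.EqvGen.rel a b (Or.inl h)
  let f : Quotient s → (Quotient (sAdd s B)) ⊕ {x // x ∈ B.erase b₀} := fun z =>
    if h : ∃ b, b ∈ B.erase b₀ ∧ (⟦b⟧ : Quotient s) = z then Sum.inr ⟨h.choose, h.choose_spec.1⟩
    else Sum.inl (Quotient.map id hmap z)
  have hfinj : Function.Injective f := by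
    intro z₁ z₂ he
    by_cases h₁ : ∃ b, b ∈ B.erase b₀ ∧ (⟦b⟧ : Quotient s) = z₁ <;>
      by_cases h₂ : ∃ b, b ∈ B.erase b₀ ∧ (⟦b⟧ : Quotient s) = z₂
    · simp only [f, dif_pos h₁, dif_pos h₂, Sum.inr.injEq, Subtype.mk.injEq] at he
      rw [← h₁.choose_spec.2, ← h₂.choose_spec.2, he]
    · simp only [f, dif_pos h₁, dif_neg h₂] at he; exact absurd he (by simp)
    · simp only [f, dif_neg h₁, dif_pos h₂] at he; exact absurd he (by simp)
    · simp only [f, dif_neg h₁, dif_neg h₂, Sum.inl.injEq] at he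
      obtain ⟨x, rfl⟩ := Quotient.exists_rep z₁
      obtain ⟨y, rfl⟩ := Quotient.exists_rep z₂
      have hxy : (sAdd s B).r x y := Quotient.exact (by simpa [Quotient.map_mk] using he)
      rw [sAdd_r] at hxy
      rcases hxy with h | ⟨⟨b, hb, hxb⟩, ⟨b', hb', hyb⟩⟩
      · exact Quotient.sound h
      · have hbb : b = b₀ := by
          by_contra hne
          exact h₁ ⟨b, Finset.mem_erase.2 ⟨hne, hb⟩, Quotient.sound (s.iseqv.symm hxb)⟩
        have hbb' : b' = b₀ := by
          by_contra hne
          exact h₂ ⟨b', Finset.mem_erase.2 ⟨hne, hb'⟩, Quotient.sound (s.iseqv.symm hyb)⟩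
        refine Quotient.sound (s.iseqv.trans hxb ?_)
        rw [hbb, ← hbb']
        exact s.iseqv.symm hyb
  have hcard := Fintype.card_le_of_injective f hfinj
  rw [Fintype.card_sum, Fintype.card_coe] at hcard
  have he1 : (B.erase b₀).card + 1 = B.card := Finset.card_erase_add_one hb₀
  omega

lemma sAddL_card (L : List (Finset S)) (hL : ∀ B ∈ L, B.Nonempty) (s : Setoid S) :
    Fintype.card (Quotient s) + L.length ≤
      Fintype.card (Quotient (sAddL s L)) + (L.map Finset.card).sum := by
  induction L generalizing s with
  | nil =>
    have : sAddL s [] = s := by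
      apply Setoid.ext
      intro a b
      show Relation.EqvGen _ a b ↔ _
      rw [eqvGen_iff_of_iff (r' := s.r) (by simp)]
      exact s.iseqv.eqvGen_iff
    rw [this]; simp
  | cons B L ih =>
    have h1 := sAdd_card s B (hL B List.mem_cons_self)
    have h2 := ih (fun B' hB' => hL B' (List.mem_cons_of_mem _ hB')) (sAdd s B)
    have key : sAddL (sAdd s B) L = sAddL s (B :: L) := by
      apply Setoid.ext
      intro a b
      show Relation.EqvGen
        (fun u v => Relation.EqvGen (fun a b => s.r a b ∨ (a ∈ B ∧ b ∈ B)) u v ∨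
          ∃ B' ∈ L, u ∈ B' ∧ v ∈ B') a b ↔ Relation.EqvGen _ a b
      rw [eqvGen_or_left]
      apply eqvGen_iff_of_iff
      intro u v
      simp only [List.mem_cons]
      constructor
      · rintro ((h | h) | ⟨B', hB', h⟩)
        · exact Or.inl h
        · exact Or.inr ⟨B, Or.inl rfl, h⟩
        · exact Or.inr ⟨B', Or.inr hB', h⟩
      · rintro (h | ⟨B', (rfl | hB'), h⟩)
        · exact Or.inl (Or.inl h)
        · exact Or.inl (Or.inr h)
        · exact Or.inr ⟨B', hB', h⟩
    rw [key] at h2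
    simp only [List.length_cons, List.map_cons, List.sum_cons]
    omega
end Card

section Main
variable {S : Type*} [DecidableEq S]
set_option linter.unusedSectionVars false

/-- The join of `π₀` and `ρ` as a setoid. -/
def baseS (π₀ ρ : Finset (Finset S)) : Setoid S :=
  Relation.EqvGen.setoid (fun u v => (∃ p ∈ π₀, u ∈ p ∧ v ∈ p) ∨ (∃ q ∈ ρ, u ∈ q ∧ v ∈ q))

/-- Connectivity of the join of `π₀ ∪ {X, Y}` with `ρ`. -/
def Conn (π₀ ρ : Finset (Finset S)) (X Y : Finset S) : Prop :=
  ∀ x y : S, (sAdd (sAdd (baseS π₀ ρ) X) Y).r x y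

lemma conn_iff_pformrel (π₀ ρ : Finset (Finset S)) (X Y : Finset S) :
    Conn π₀ ρ X Y ↔ ∀ x y : S, Relation.EqvGen (fun u v =>
      (∃ p ∈ π₀ ∪ {X, Y}, u ∈ p ∧ v ∈ p) ∨ (∃ q ∈ ρ, u ∈ q ∧ v ∈ q)) x y := by
  refine forall_congr' fun x => forall_congr' fun y => ?_
  rw [sAdd_sAdd_rel]
  show Relation.EqvGen (fun u v => Relation.EqvGen _ u v ∨ _) x y ↔ _
  rw [eqvGen_or_left]
  apply eqvGen_iff_of_iff
  intro u v
  simp only [Finset.mem_union, Finset.mem_insert, Finset.mem_singleton, List.mem_cons,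
    List.not_mem_nil, or_false, List.mem_singleton]
  constructor
  · rintro ((⟨p, hp, h⟩ | h) | ⟨B, (rfl | rfl), h⟩)
    · exact Or.inl ⟨p, Or.inl hp, h⟩
    · exact Or.inr h
    · exact Or.inl ⟨B, Or.inr (Or.inl rfl), h⟩
    · exact Or.inl ⟨B, Or.inr (Or.inr rfl), h⟩
  · rintro (⟨p, (hp | rfl | rfl), h⟩ | h)
    · exact Or.inl (Or.inl ⟨p, hp, h⟩)
    · exact Or.inr ⟨p, Or.inl rfl, h⟩
    · exact Or.inr ⟨p, Or.inr rfl, h⟩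
    · exact Or.inl (Or.inr h)


lemma pform_eq {S : Type*} [Fintype S] [DecidableEq S] (π₀ ρ : Finset (Finset S))
    (X Y : Finset S) (hXY : X ≠ Y) (hXπ : X ∉ π₀) (hYπ : Y ∉ π₀) :
    pform (π₀ ∪ {X, Y}) ρ =
      if π₀.card + 2 + ρ.card = Fintype.card S + 1 ∧ Conn π₀ ρ X Y then 1 else 0 := by
  have hdisj : Disjoint π₀ ({X, Y} : Finset (Finset S)) := by
    rw [Finset.disjoint_right]
    intro p hp
    rcases Finset.mem_insert.1 hp with rfl | hp'
    · exact hXπ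
    · rw [Finset.mem_singleton] at hp'; exact hp' ▸ hYπ
  have hcard : (π₀ ∪ {X, Y}).card = π₀.card + 2 := by
    rw [Finset.card_union_of_disjoint hdisj, Finset.card_insert_of_notMem
      (by rw [Finset.mem_singleton]; exact hXY), Finset.card_singleton]
  unfold pform
  refine if_congr ?_ rfl rfl
  exact and_congr (by rw [hcard]) (conn_iff_pformrel π₀ ρ X Y).symm

lemma core_struct {S : Type*} [Fintype S] [DecidableEq S] (π₀ ρ : Finset (Finset S))
    (Q X Y : Finset S)
    (hπ₀ : IsPartitionOn π₀ (Finset.univ \ Q)) (hρ : IsPartitionOn ρ Finset.univ)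
    (hX : X.Nonempty) (hY : Y.Nonempty) (hXY : Disjoint X Y) (hXYQ : X ∪ Y = Q)
    (hcard : π₀.card + 2 + ρ.card = Fintype.card S + 1)
    (hconn : Conn π₀ ρ X Y) :
    (∀ x : S, ∃ w ∈ Q, (baseS π₀ ρ).r x w) ∧
    ∃ u ∈ Q, ∃ v ∈ Q, u ≠ v ∧ (baseS π₀ ρ).r u v ∧
      ∀ w ∈ Q, ∀ w' ∈ Q, (baseS π₀ ρ).r w w' →
        w = w' ∨ (w = u ∧ w' = v) ∨ (w = v ∧ w' = u) := by
  classical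
  set s₀ : Setoid S := baseS π₀ ρ with hs₀
  have hXQ : X ⊆ Q := hXYQ ▸ Finset.subset_union_left
  have hYQ : Y ⊆ Q := hXYQ ▸ Finset.subset_union_right
  -- P : every element is s₀-related to an element of Q
  have hP : ∀ x : S, ∃ w ∈ Q, s₀.r x w := by
    intro x
    obtain ⟨a, ha⟩ := hX
    have h2 := hconn x a
    rw [sAdd_r] at h2
    rcases h2 with h2 | ⟨⟨b, hbY, hxb⟩, -⟩
    · rw [sAdd_r] at h2
      rcases h2 with h2 | ⟨⟨b, hbX, hxb⟩, -⟩
      · exact ⟨a, hXQ ha, h2⟩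
      · exact ⟨b, hXQ hbX, hxb⟩
    · rw [sAdd_r] at hxb
      rcases hxb with hxb | ⟨⟨b', hb'X, hxb'⟩, -⟩
      · exact ⟨b, hYQ hbY, hxb⟩
      · exact ⟨b', hXQ hb'X, hxb'⟩
  refine ⟨hP, ?_⟩
  set c := Fintype.card (Quotient s₀) with hc
  -- lower bound : Q.card ≤ c + 1
  have hlow : Q.card ≤ c + 1 := by
    set L : List (Finset S) := π₀.toList ++ ρ.toList with hL
    have hLne : ∀ B ∈ L, B.Nonempty := by
      intro B hBL
      rcases List.mem_append.1 hBL with h | h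
      · exact hπ₀.1 B (Finset.mem_toList.1 h)
      · exact hρ.1 B (Finset.mem_toList.1 h)
    set eqS : Setoid S := ⟨Eq, eq_equivalence⟩ with heqS
    have h0 : Fintype.card S ≤ @Fintype.card (Quotient eqS)
        (@Quotient.fintype S _ eqS (fun a b => Classical.propDecidable _)) := by
      refine @Fintype.card_le_of_injective S (Quotient eqS) _
        (@Quotient.fintype S _ eqS (fun a b => Classical.propDecidable _))
        (Quotient.mk eqS) ?_
      intro a b h
      exact Quotient.exact h
    have h1 := sAddL_card L hLne eqS
    have h2 : sAddL eqS L = s₀ := by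
      apply Setoid.ext
      intro a b
      show Relation.EqvGen _ a b ↔ Relation.EqvGen _ a b
      constructor
      · apply eqvGen_of_imp
        intro u v huv
        rcases huv with huv | ⟨B, hBL, hm⟩
        · exact huv ▸ Relation.EqvGen.refl u
        · rcases List.mem_append.1 hBL with h | h
          · exact Relation.EqvGen.rel _ _ (Or.inl ⟨B, Finset.mem_toList.1 h, hm⟩)
          · exact Relation.EqvGen.rel _ _ (Or.inr ⟨B, Finset.mem_toList.1 h, hm⟩)
      · apply eqvGen_of_imp
        intro u v huv
        rcases huv with ⟨p, hp, hm⟩ | ⟨p, hp, hm⟩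
        · exact Relation.EqvGen.rel _ _ (Or.inr ⟨p, List.mem_append.2
            (Or.inl (Finset.mem_toList.2 hp)), hm⟩)
        · exact Relation.EqvGen.rel _ _ (Or.inr ⟨p, List.mem_append.2
            (Or.inr (Finset.mem_toList.2 hp)), hm⟩)
    rw [h2] at h1
    have hsum : (L.map Finset.card).sum = π₀.sum Finset.card + ρ.sum Finset.card := by
      rw [hL, List.map_append, List.sum_append, listsum_eq, listsum_eq]
    have hlen : L.length = π₀.card + ρ.card := by
      rw [hL, List.length_append, Finset.length_toList, Finset.length_toList]
    have hπsum : π₀.sum Finset.card = (Finset.univ \ Q).card := by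
      rw [← hπ₀.2.2]
      exact (Finset.card_biUnion hπ₀.2.1).symm
    have hρsum : ρ.sum Finset.card = Fintype.card S := by
      rw [← Finset.card_univ, ← hρ.2.2]
      exact (Finset.card_biUnion hρ.2.1).symm
    have hsd : (Finset.univ \ Q).card + Q.card = Fintype.card S :=
      Finset.card_sdiff_add_card_eq_card (Finset.subset_univ Q)
    rw [hsum, hlen, hπsum, hρsum] at h1
    have h3 : Fintype.card S + (π₀.card + ρ.card) ≤
        Fintype.card (Quotient s₀) + ((Finset.univ \ Q).card + Fintype.card S) :=
      le_trans (Nat.add_le_add_right h0 _) h1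
    omega
  -- upper bound : c + 2 ≤ 1 + Q.card
  have hup : c + 2 ≤ 1 + Q.card := by
    have h1 := sAddL_card [X, Y] (by
      intro B hB
      rcases List.mem_cons.1 hB with rfl | hB
      · exact hX
      · rw [List.mem_singleton] at hB; exact hB ▸ hY) s₀
    have hone : Fintype.card (Quotient (sAddL s₀ [X, Y])) ≤ 1 := by
      refine Fintype.card_le_one_iff.2 fun a b => ?_
      refine Quotient.inductionOn₂ a b fun x y => Quotient.sound ?_
      exact (sAdd_sAdd_rel s₀ X Y x y).1 (hconn x y)
    have hq : X.card + Y.card = Q.card := by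
      rw [← hXYQ, Finset.card_union_of_disjoint hXY]
    simp only [List.length_cons, List.length_nil, List.map_cons, List.map_nil,
      List.sum_cons, List.sum_nil] at h1
    omega
  have hqc : Q.card = c + 1 := by omega
  -- section of the quotient map inside Q
  have hsec : ∀ z : Quotient s₀, ∃ w, w ∈ Q ∧ (⟦w⟧ : Quotient s₀) = z := by
    intro z
    obtain ⟨x, rfl⟩ := Quotient.exists_rep z
    obtain ⟨w, hwQ, hr⟩ := hP x
    exact ⟨w, hwQ, Quotient.sound (s₀.iseqv.symm hr)⟩
  choose h hhQ hh using hsec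
  have hinj : Function.Injective h := by
    intro z₁ z₂ e
    rw [← hh z₁, ← hh z₂, e]
  set T : Finset S := Finset.univ.image h with hT
  have hTQ : T ⊆ Q := by
    intro t ht
    obtain ⟨z, -, rfl⟩ := Finset.mem_image.1 ht
    exact hhQ z
  have hTcard : T.card = c := by
    rw [hT, Finset.card_image_of_injective _ hinj, Finset.card_univ]
  have hQT : (Q \ T).card = 1 := by
    have := Finset.card_sdiff_add_card_eq_card hTQ
    omega
  obtain ⟨u, hu1⟩ := Finset.card_eq_one.1 hQT
  have huQT : u ∈ Q \ T := by rw [hu1]; exact Finset.mem_singleton_self u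
  have huQ : u ∈ Q := (Finset.mem_sdiff.1 huQT).1
  have huT : u ∉ T := (Finset.mem_sdiff.1 huQT).2
  set v : S := h ⟦u⟧ with hv
  have hvT : v ∈ T := Finset.mem_image.2 ⟨⟦u⟧, Finset.mem_univ _, rfl⟩
  have hvQ : v ∈ Q := hTQ hvT
  have hruv : s₀.r u v := s₀.iseqv.symm (Quotient.exact (hh ⟦u⟧))
  have huv : u ≠ v := fun e => huT (e ▸ hvT)
  -- elements of T lie in pairwise distinct classes
  have hTdist : ∀ a ∈ T, ∀ b ∈ T, s₀.r a b → a = b := by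
    intro a ha b hb hab
    obtain ⟨za, -, rfl⟩ := Finset.mem_image.1 ha
    obtain ⟨zb, -, rfl⟩ := Finset.mem_image.1 hb
    have : za = zb := by
      rw [← hh za, ← hh zb]
      exact Quotient.sound hab
    rw [this]
  have hdich : ∀ w ∈ Q, w ∈ T ∨ w = u := by
    intro w hw
    by_cases hwT : w ∈ T
    · exact Or.inl hwT
    · right
      have : w ∈ Q \ T := Finset.mem_sdiff.2 ⟨hw, hwT⟩
      rw [hu1] at this
      exact Finset.mem_singleton.1 this
  refine ⟨u, huQ, v, hvQ, huv, hruv, ?_⟩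
  intro w hwQ w' hw'Q hr
  rcases hdich w hwQ with hwT | hwu
  · rcases hdich w' hw'Q with hw'T | hw'u
    · exact Or.inl (hTdist w hwT w' hw'T hr)
    · -- w ∈ T, w' = u : w = v
      have h1 : s₀.r w v := s₀.iseqv.trans hr (hw'u ▸ hruv)
      exact Or.inr (Or.inr ⟨hTdist w hwT v hvT h1, hw'u⟩)
  · rcases hdich w' hw'Q with hw'T | hw'u
    · -- w = u, w' ∈ T : w' = v
      have h1 : s₀.r w' v := s₀.iseqv.trans (s₀.iseqv.symm hr) (hwu ▸ hruv)
      exact Or.inr (Or.inl ⟨hwu, hTdist w' hw'T v hvT h1⟩)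
    · exact Or.inl (hwu.trans hw'u.symm)

lemma crit_iff {S : Type*} [DecidableEq S] (π₀ ρ : Finset (Finset S))
    (Q X Y : Finset S) (u v : S)
    (hP : ∀ x : S, ∃ w ∈ Q, (baseS π₀ ρ).r x w)
    (huQ : u ∈ Q) (hvQ : v ∈ Q) (huv : u ≠ v) (hruv : (baseS π₀ ρ).r u v)
    (huniq : ∀ w ∈ Q, ∀ w' ∈ Q, (baseS π₀ ρ).r w w' →
      w = w' ∨ (w = u ∧ w' = v) ∨ (w = v ∧ w' = u))
    (hX : X.Nonempty) (hY : Y.Nonempty) (hXY : Disjoint X Y) (hXYQ : X ∪ Y = Q) :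
    Conn π₀ ρ X Y ↔ ((u ∈ X ∧ v ∈ Y) ∨ (u ∈ Y ∧ v ∈ X)) := by
  classical
  set s₀ : Setoid S := baseS π₀ ρ with hs₀
  have hXQ : X ⊆ Q := hXYQ ▸ Finset.subset_union_left
  have hYQ : Y ⊆ Q := hXYQ ▸ Finset.subset_union_right
  constructor
  · intro hc
    by_contra hsplit
    push_neg at hsplit
    -- no class meets both X and Y
    have hnz : ∀ z : S, ¬((∃ a ∈ X, s₀.r z a) ∧ (∃ b ∈ Y, s₀.r z b)) := by
      rintro z ⟨⟨a, ha, hza⟩, ⟨b, hb, hzb⟩⟩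
      have hab : s₀.r a b := s₀.iseqv.trans (s₀.iseqv.symm hza) hzb
      have hne : a ≠ b := fun e => (Finset.disjoint_left.1 hXY ha) (e ▸ hb)
      rcases huniq a (hXQ ha) b (hYQ hb) hab with e | ⟨rfl, rfl⟩ | ⟨rfl, rfl⟩
      · exact hne e
      · exact hsplit.1 ha hb
      · exact hsplit.2 hb ha
    obtain ⟨x₀, hx₀⟩ := hX
    obtain ⟨y₀, hy₀⟩ := hY
    have h2 := hc x₀ y₀
    rw [sAdd_r] at h2
    rcases h2 with h2 | ⟨⟨b, hbY, hx₀b⟩, -⟩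
    · rw [sAdd_r] at h2
      rcases h2 with h2 | ⟨-, ⟨b, hbX, hy₀b⟩⟩
      · exact hnz y₀ ⟨⟨x₀, hx₀, s₀.iseqv.symm h2⟩, ⟨y₀, hy₀, s₀.iseqv.refl y₀⟩⟩
      · exact hnz y₀ ⟨⟨b, hbX, hy₀b⟩, ⟨y₀, hy₀, s₀.iseqv.refl y₀⟩⟩
    · rw [sAdd_r] at hx₀b
      rcases hx₀b with hx₀b | ⟨-, ⟨b', hb'X, hbb'⟩⟩
      · exact hnz x₀ ⟨⟨x₀, hx₀, s₀.iseqv.refl x₀⟩, ⟨b, hbY, hx₀b⟩⟩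
      · exact hnz b ⟨⟨b', hb'X, hbb'⟩, ⟨b, hbY, s₀.iseqv.refl b⟩⟩
  · intro hcase
    have key : ∀ z : S, ∃ b ∈ Y, (sAdd s₀ X).r z b := by
      intro z
      obtain ⟨w, hwQ, hzw⟩ := hP z
      rw [← hXYQ] at hwQ
      rcases hcase with ⟨huX, hvY⟩ | ⟨huY, hvX⟩
      · rcases Finset.mem_union.1 hwQ with hwX | hwY
        · have hMXz : ∃ a ∈ X, s₀.r z a := ⟨w, hwX, hzw⟩
          have hMXv : ∃ a ∈ X, s₀.r v a := ⟨u, huX, s₀.iseqv.symm hruv⟩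
          exact ⟨v, hvY, (sAdd_r s₀ X z v).2 (Or.inr ⟨hMXz, hMXv⟩)⟩
        · exact ⟨w, hwY, (sAdd_r s₀ X z w).2 (Or.inl hzw)⟩
      · rcases Finset.mem_union.1 hwQ with hwX | hwY
        · have hMXz : ∃ a ∈ X, s₀.r z a := ⟨w, hwX, hzw⟩
          have hMXu : ∃ a ∈ X, s₀.r u a := ⟨v, hvX, hruv⟩
          exact ⟨u, huY, (sAdd_r s₀ X z u).2 (Or.inr ⟨hMXz, hMXu⟩)⟩
        · exact ⟨w, hwY, (sAdd_r s₀ X z w).2 (Or.inl hzw)⟩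
    intro x y
    exact (sAdd_r (sAdd s₀ X) Y x y).2 (Or.inr ⟨key x, key y⟩)

end Main

/-- Let `S` be a finite set, `A`, `B`, `C`, `D` pairwise disjoint
nonempty subsets of `S`, and `π₀` a partition of `S ∖ (A∪B∪C∪D)`.  Then for every
partition `ρ` of `S`:
`⟨π₀∪{A∪C, B∪D}, ρ⟩ + ⟨π₀∪{A∪B, C∪D}, ρ⟩ + ⟨π₀∪{A∪D, B∪C}, ρ⟩
  = ⟨π₀∪{A, B∪C∪D}, ρ⟩ + ⟨π₀∪{B, A∪C∪D}, ρ⟩ + ⟨π₀∪{C, A∪B∪D}, ρ⟩ + ⟨π₀∪{D, A∪B∪C}, ρ⟩`. -/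
theorem generalized_crossing_identity {S : Type*} [Fintype S] [DecidableEq S]
    (A B C D : Finset S)
    (hA : A.Nonempty) (hB : B.Nonempty) (hC : C.Nonempty) (hD : D.Nonempty)
    (hAB : Disjoint A B) (hAC : Disjoint A C) (hAD : Disjoint A D)
    (hBC : Disjoint B C) (hBD : Disjoint B D) (hCD : Disjoint C D)
    (π₀ : Finset (Finset S))
    (hπ₀ : IsPartitionOn π₀ (Finset.univ \ (A ∪ B ∪ C ∪ D)))
    (ρ : Finset (Finset S)) (hρ : IsPartitionOn ρ Finset.univ) :
    pform (π₀ ∪ {A ∪ C, B ∪ D}) ρ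
      + pform (π₀ ∪ {A ∪ B, C ∪ D}) ρ
      + pform (π₀ ∪ {A ∪ D, B ∪ C}) ρ
    = pform (π₀ ∪ {A, B ∪ C ∪ D}) ρ
      + pform (π₀ ∪ {B, A ∪ C ∪ D}) ρ
      + pform (π₀ ∪ {C, A ∪ B ∪ D}) ρ
      + pform (π₀ ∪ {D, A ∪ B ∪ C}) ρ := by
  classical
  set Q : Finset S := A ∪ B ∪ C ∪ D with hQdef
  have hne : ∀ X Y : Finset S, X.Nonempty → Disjoint X Y → X ≠ Y := by
    rintro X Y ⟨a, ha⟩ hd he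
    exact (Finset.disjoint_left.1 hd ha) (he ▸ ha)
  have hnotπ : ∀ X : Finset S, X.Nonempty → X ⊆ Q → X ∉ π₀ := by
    rintro X ⟨a, ha⟩ hXQ hmem
    have h1 : X ⊆ Finset.univ \ Q := hπ₀.2.2 ▸ Finset.subset_biUnion_of_mem id hmem
    exact (Finset.mem_sdiff.1 (h1 ha)).2 (hXQ ha)
  -- nonemptiness
  have nAC : (A ∪ C).Nonempty := ⟨hA.choose, Finset.mem_union_left _ hA.choose_spec⟩
  have nAB : (A ∪ B).Nonempty := ⟨hA.choose, Finset.mem_union_left _ hA.choose_spec⟩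
  have nAD : (A ∪ D).Nonempty := ⟨hA.choose, Finset.mem_union_left _ hA.choose_spec⟩
  have nBD : (B ∪ D).Nonempty := ⟨hB.choose, Finset.mem_union_left _ hB.choose_spec⟩
  have nBC : (B ∪ C).Nonempty := ⟨hB.choose, Finset.mem_union_left _ hB.choose_spec⟩
  have nCD : (C ∪ D).Nonempty := ⟨hC.choose, Finset.mem_union_left _ hC.choose_spec⟩
  have nBCD : (B ∪ C ∪ D).Nonempty := ⟨hB.choose, Finset.mem_union_left _ (Finset.mem_union_left _ hB.choose_spec)⟩
  have nACD : (A ∪ C ∪ D).Nonempty := ⟨hA.choose, Finset.mem_union_left _ (Finset.mem_union_left _ hA.choose_spec)⟩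
  have nABD : (A ∪ B ∪ D).Nonempty := ⟨hA.choose, Finset.mem_union_left _ (Finset.mem_union_left _ hA.choose_spec)⟩
  have nABC : (A ∪ B ∪ C).Nonempty := ⟨hA.choose, Finset.mem_union_left _ (Finset.mem_union_left _ hA.choose_spec)⟩
  have hBA := hAB.symm; have hCA := hAC.symm; have hDA := hAD.symm
  have hCB := hBC.symm; have hDB := hBD.symm; have hDC := hCD.symm
  -- disjointness of the seven pairs
  have dACBD : Disjoint (A ∪ C) (B ∪ D) := by
    simp only [Finset.disjoint_union_left, Finset.disjoint_union_right]
    tauto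
  have dABCD : Disjoint (A ∪ B) (C ∪ D) := by
    simp only [Finset.disjoint_union_left, Finset.disjoint_union_right]
    tauto
  have dADBC : Disjoint (A ∪ D) (B ∪ C) := by
    simp only [Finset.disjoint_union_left, Finset.disjoint_union_right]
    tauto
  have dA : Disjoint A (B ∪ C ∪ D) := by
    simp only [Finset.disjoint_union_right]
    tauto
  have dB : Disjoint B (A ∪ C ∪ D) := by
    simp only [Finset.disjoint_union_right]
    tauto
  have dC : Disjoint C (A ∪ B ∪ D) := by
    simp only [Finset.disjoint_union_right]
    tauto
  have dD : Disjoint D (A ∪ B ∪ C) := by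
    simp only [Finset.disjoint_union_right]
    tauto
  -- the seven unions are Q
  have uACBD : (A ∪ C) ∪ (B ∪ D) = Q := by ext x; simp only [hQdef, Finset.mem_union]; tauto
  have uABCD : (A ∪ B) ∪ (C ∪ D) = Q := by ext x; simp only [hQdef, Finset.mem_union]; tauto
  have uADBC : (A ∪ D) ∪ (B ∪ C) = Q := by ext x; simp only [hQdef, Finset.mem_union]; tauto
  have uA : A ∪ (B ∪ C ∪ D) = Q := by ext x; simp only [hQdef, Finset.mem_union]; tauto
  have uB : B ∪ (A ∪ C ∪ D) = Q := by ext x; simp only [hQdef, Finset.mem_union]; tauto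
  have uC : C ∪ (A ∪ B ∪ D) = Q := by ext x; simp only [hQdef, Finset.mem_union]; tauto
  have uD : D ∪ (A ∪ B ∪ C) = Q := by ext x; simp only [hQdef, Finset.mem_union]; tauto
  -- rewrite the seven pforms
  rw [pform_eq π₀ ρ _ _ (hne _ _ nAC dACBD)
      (hnotπ _ nAC (uACBD ▸ Finset.subset_union_left))
      (hnotπ _ nBD (uACBD ▸ Finset.subset_union_right)),
    pform_eq π₀ ρ _ _ (hne _ _ nAB dABCD)
      (hnotπ _ nAB (uABCD ▸ Finset.subset_union_left))
      (hnotπ _ nCD (uABCD ▸ Finset.subset_union_right)),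
    pform_eq π₀ ρ _ _ (hne _ _ nAD dADBC)
      (hnotπ _ nAD (uADBC ▸ Finset.subset_union_left))
      (hnotπ _ nBC (uADBC ▸ Finset.subset_union_right)),
    pform_eq π₀ ρ _ _ (hne _ _ hA dA)
      (hnotπ _ hA (uA ▸ Finset.subset_union_left))
      (hnotπ _ nBCD (uA ▸ Finset.subset_union_right)),
    pform_eq π₀ ρ _ _ (hne _ _ hB dB)
      (hnotπ _ hB (uB ▸ Finset.subset_union_left))
      (hnotπ _ nACD (uB ▸ Finset.subset_union_right)),
    pform_eq π₀ ρ _ _ (hne _ _ hC dC)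
      (hnotπ _ hC (uC ▸ Finset.subset_union_left))
      (hnotπ _ nABD (uC ▸ Finset.subset_union_right)),
    pform_eq π₀ ρ _ _ (hne _ _ hD dD)
      (hnotπ _ hD (uD ▸ Finset.subset_union_left))
      (hnotπ _ nABC (uD ▸ Finset.subset_union_right))]
  by_cases hcard : π₀.card + 2 + ρ.card = Fintype.card S + 1
  · by_cases h7 : Conn π₀ ρ (A ∪ C) (B ∪ D) ∨ Conn π₀ ρ (A ∪ B) (C ∪ D) ∨
        Conn π₀ ρ (A ∪ D) (B ∪ C) ∨ Conn π₀ ρ A (B ∪ C ∪ D) ∨ Conn π₀ ρ B (A ∪ C ∪ D) ∨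
        Conn π₀ ρ C (A ∪ B ∪ D) ∨ Conn π₀ ρ D (A ∪ B ∪ C)
    · have hcore : (∀ x : S, ∃ w ∈ Q, (baseS π₀ ρ).r x w) ∧
          ∃ u ∈ Q, ∃ v ∈ Q, u ≠ v ∧ (baseS π₀ ρ).r u v ∧
            ∀ w ∈ Q, ∀ w' ∈ Q, (baseS π₀ ρ).r w w' →
              w = w' ∨ (w = u ∧ w' = v) ∨ (w = v ∧ w' = u) := by
        rcases h7 with h | h | h | h | h | h | h
        · exact core_struct π₀ ρ Q _ _ hπ₀ hρ nAC nBD dACBD uACBD hcard h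
        · exact core_struct π₀ ρ Q _ _ hπ₀ hρ nAB nCD dABCD uABCD hcard h
        · exact core_struct π₀ ρ Q _ _ hπ₀ hρ nAD nBC dADBC uADBC hcard h
        · exact core_struct π₀ ρ Q _ _ hπ₀ hρ hA nBCD dA uA hcard h
        · exact core_struct π₀ ρ Q _ _ hπ₀ hρ hB nACD dB uB hcard h
        · exact core_struct π₀ ρ Q _ _ hπ₀ hρ hC nABD dC uC hcard h
        · exact core_struct π₀ ρ Q _ _ hπ₀ hρ hD nABC dD uD hcard h
      obtain ⟨hP, u, huQ, v, hvQ, huv, hruv, huniq⟩ := hcore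
      simp only [crit_iff π₀ ρ Q _ _ u v hP huQ hvQ huv hruv huniq nAC nBD dACBD uACBD,
        crit_iff π₀ ρ Q _ _ u v hP huQ hvQ huv hruv huniq nAB nCD dABCD uABCD,
        crit_iff π₀ ρ Q _ _ u v hP huQ hvQ huv hruv huniq nAD nBC dADBC uADBC,
        crit_iff π₀ ρ Q _ _ u v hP huQ hvQ huv hruv huniq hA nBCD dA uA,
        crit_iff π₀ ρ Q _ _ u v hP huQ hvQ huv hruv huniq hB nACD dB uB,
        crit_iff π₀ ρ Q _ _ u v hP huQ hvQ huv hruv huniq hC nABD dC uC,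
        crit_iff π₀ ρ Q _ _ u v hP huQ hvQ huv hruv huniq hD nABC dD uD]
      have mab : ∀ x : S, x ∈ A → x ∉ B := fun x hx => Finset.disjoint_left.1 hAB hx
      have mba : ∀ x : S, x ∈ B → x ∉ A := fun x hx => Finset.disjoint_right.1 hAB hx
      have mac : ∀ x : S, x ∈ A → x ∉ C := fun x hx => Finset.disjoint_left.1 hAC hx
      have mca : ∀ x : S, x ∈ C → x ∉ A := fun x hx => Finset.disjoint_right.1 hAC hx
      have mad : ∀ x : S, x ∈ A → x ∉ D := fun x hx => Finset.disjoint_left.1 hAD hx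
      have mda : ∀ x : S, x ∈ D → x ∉ A := fun x hx => Finset.disjoint_right.1 hAD hx
      have mbc : ∀ x : S, x ∈ B → x ∉ C := fun x hx => Finset.disjoint_left.1 hBC hx
      have mcb : ∀ x : S, x ∈ C → x ∉ B := fun x hx => Finset.disjoint_right.1 hBC hx
      have mbd : ∀ x : S, x ∈ B → x ∉ D := fun x hx => Finset.disjoint_left.1 hBD hx
      have mdb : ∀ x : S, x ∈ D → x ∉ B := fun x hx => Finset.disjoint_right.1 hBD hx
      have mcd : ∀ x : S, x ∈ C → x ∉ D := fun x hx => Finset.disjoint_left.1 hCD hx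
      have mdc : ∀ x : S, x ∈ D → x ∉ C := fun x hx => Finset.disjoint_right.1 hCD hx
      rw [hQdef] at huQ hvQ
      simp only [Finset.mem_union] at huQ hvQ
      rcases huQ with ((hu | hu) | hu) | hu <;> rcases hvQ with ((hv | hv) | hv) | hv <;>
        simp [Finset.mem_union, hu, hv, mab, mba, mac, mca, mad, mda, mbc, mcb, mbd, mdb,
          mcd, mdc, hcard]
    · push_neg at h7
      obtain ⟨h1, h2, h3, h4, h5, h6, h7⟩ := h7
      rw [if_neg (fun hh => h1 hh.2), if_neg (fun hh => h2 hh.2), if_neg (fun hh => h3 hh.2),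
        if_neg (fun hh => h4 hh.2), if_neg (fun hh => h5 hh.2), if_neg (fun hh => h6 hh.2),
        if_neg (fun hh => h7 hh.2)]
      norm_num
  · rw [if_neg (fun hh => hcard hh.1), if_neg (fun hh => hcard hh.1),
      if_neg (fun hh => hcard hh.1), if_neg (fun hh => hcard hh.1),
      if_neg (fun hh => hcard hh.1), if_neg (fun hh => hcard hh.1),
      if_neg (fun hh => hcard hh.1)]
    norm_num
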